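/- Let R be a commutative ring, let I be an ideal of R, and let x, y ∈ I be nonzerodivisors on R. Then x·(y : I) = y·(x : I). -/
import Mathlib

lemma colon_swap_le {R : Type*} [CommRing R] (I : Ideal R) (x y : R)
    (hxI : x ∈ I) (hy : y ∈ nonZeroDivisors R) :
    Ideal.span {x} * ((Ideal.span {y}).colon I) ≤
      Ideal.span {y} * ((Ideal.span {x}).colon I) := by
  rw [Ideal.span_singleton_mul_le_iff]
  intro r hr
  -- r * x ∈ span{y}, say r*x = y*s
  have hrx : r * x ∈ Ideal.span {y} := by
    have := Submodule.mem_colon.mp hr x hxI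
    simpa [smul_eq_mul, mul_comm] using this
  obtain ⟨s, hs⟩ := Ideal.mem_span_singleton'.mp hrx
  -- hs : s * y = r * x
  have hsmem : s ∈ (Ideal.span {x}).colon I := by
    refine Submodule.mem_colon.mpr fun t ht => ?_
    have htr : r * t ∈ Ideal.span {y} := by
      have := Submodule.mem_colon.mp hr t ht
      simpa [smul_eq_mul, mul_comm] using this
    obtain ⟨u, hu⟩ := Ideal.mem_span_singleton'.mp htr
    have : y * (s * t) = y * (u * x) := by
      calc y * (s * t) = (s * y) * t := by ring
        _ = (r * x) * t := by rw [hs]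
        _ = (r * t) * x := by ring
        _ = (u * y) * x := by rw [hu]
        _ = y * (u * x) := by ring
    have heq : s * t = u * x := (mul_cancel_left_mem_nonZeroDivisors hy).mp this
    rw [smul_eq_mul]
    exact Ideal.mem_span_singleton'.mpr ⟨u, heq.symm⟩
  have hxr : x * r = y * s := by rw [mul_comm x r, ← hs]; ring
  rw [hxr]
  exact Ideal.mul_mem_mul (Ideal.mem_span_singleton_self y) hsmem

theorem colon_swap {R : Type*} [CommRing R] (I : Ideal R) (x y : R)
    (hxI : x ∈ I) (hyI : y ∈ I)
    (hx : x ∈ nonZeroDivisors R) (hy : y ∈ nonZeroDivisors R) :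
    Ideal.span {x} * ((Ideal.span {y}).colon I) =
      Ideal.span {y} * ((Ideal.span {x}).colon I) := by
  exact le_antisymm (colon_swap_le I x y hxI hy) (colon_swap_le I y x hyI hx)
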